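/- Let R > 0. There exists a constant C = C(R) with the following property: for every ω ∈ L²(ℝ²) supported in the closed ball of radius R and with ∫_{ℝ²} ω dx = 0, the velocity u = K ∗ ω given by the Biot-Savart law belongs to L²(ℝ²; ℝ²) and satisfies ‖u‖_{L²(ℝ²)} ≤ C ‖ω‖_{L²(ℝ²)}. -/

import Mathlib

open MeasureTheory Filter Metric Set
open scoped ENNReal

noncomputable section

/-- The plane `ℝ²` as a Euclidean space. -/
abbrev Plane := EuclideanSpace ℝ (Fin 2)

/-- The Biot-Savart kernel `K(x) = x⊥ / (2π |x|²)`, where `x⊥ = (-x₂, x₁)`. -/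
def biotSavartKernel (x : Plane) : Plane :=
  (2 * Real.pi * ‖x‖ ^ 2)⁻¹ • (WithLp.equiv 2 (Fin 2 → ℝ)).symm ![-(x 1), x 0]

/-- The velocity associated to a vorticity `ω` via the Biot-Savart law `u = K ∗ ω`. -/
def biotSavartVelocity (ω : Plane → ℝ) (x : Plane) : Plane :=
  ∫ y, ω y • biotSavartKernel (x - y)

-- auxiliary: perp map
def perpBS (v : Plane) : Plane := (WithLp.equiv 2 (Fin 2 → ℝ)).symm ![-(v 1), v 0]

lemma biotSavartKernel_eq' (x : Plane) :
    biotSavartKernel x = (2 * Real.pi * ‖x‖ ^ 2)⁻¹ • perpBS x := rfl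

lemma norm_perpBS (v : Plane) : ‖perpBS v‖ = ‖v‖ := by
  rw [EuclideanSpace.norm_eq, EuclideanSpace.norm_eq]
  simp [Fin.sum_univ_two, perpBS]
  ring_nf

lemma perpBS_sub (a b : Plane) : perpBS (a - b) = perpBS a - perpBS b := by
  ext i
  fin_cases i <;> simp [perpBS] <;> ring

lemma norm_biotSavartKernel (x : Plane) :
    ‖biotSavartKernel x‖ = (2 * Real.pi * ‖x‖)⁻¹ := by
  rw [biotSavartKernel_eq', norm_smul, norm_perpBS, Real.norm_eq_abs]
  rcases eq_or_ne x 0 with h | h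
  · simp [h]
  · have hx : 0 < ‖x‖ := norm_pos_iff.2 h
    have hpi := Real.pi_pos
    rw [abs_of_nonneg (by positivity)]
    field_simp

lemma continuous_perpBS : Continuous perpBS := by
  have h : Continuous fun w : Fin 2 → ℝ => ![-(w 1), w 0] := by
    refine continuous_pi fun i => ?_
    fin_cases i
    · exact (continuous_apply 1).neg
    · exact continuous_apply 0
  exact PiLp.continuous_toLp 2 (fun _ : Fin 2 => ℝ) |>.comp
    (h.comp (PiLp.continuous_ofLp 2 (fun _ : Fin 2 => ℝ)))

lemma measurable_biotSavartKernel : Measurable biotSavartKernel := by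
  have h1 : Measurable fun x : Plane => (2 * Real.pi * ‖x‖ ^ 2)⁻¹ :=
    ((continuous_const.mul ((continuous_norm).pow 2)).measurable).inv
  exact h1.smul continuous_perpBS.measurable

lemma kernel_diff_bound {R : ℝ} (hR : 0 < R) {x y : Plane}
    (hy : ‖y‖ ≤ R) (hx : 4 * R ≤ ‖x‖) :
    ‖biotSavartKernel (x - y) - biotSavartKernel x‖ ≤ 2 * R / ‖x‖ ^ 2 := by
  have hpi : (3:ℝ) < Real.pi := Real.pi_gt_three
  have hX0 : (0:ℝ) < ‖x‖ := lt_of_lt_of_le (by positivity) hx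
  have hYX : ‖y‖ ≤ ‖x‖ / 4 := by linarith
  have hXA : ‖x‖ - ‖y‖ ≤ ‖x - y‖ := norm_sub_norm_le x y
  have hAX : 3 / 4 * ‖x‖ ≤ ‖x - y‖ := by linarith
  have hA0 : (0:ℝ) < ‖x - y‖ := by linarith
  have hAup : ‖x - y‖ ≤ ‖x‖ + ‖y‖ := norm_sub_le x y
  have hA2 : 9 / 16 * ‖x‖ ^ 2 ≤ ‖x - y‖ ^ 2 := by nlinarith
  set c₁ : ℝ := (2 * Real.pi * ‖x - y‖ ^ 2)⁻¹ with hc₁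
  set c₂ : ℝ := (2 * Real.pi * ‖x‖ ^ 2)⁻¹ with hc₂
  have hdecomp : biotSavartKernel (x - y) - biotSavartKernel x
      = c₁ • (-perpBS y) + (c₁ - c₂) • perpBS x := by
    rw [biotSavartKernel_eq', biotSavartKernel_eq', perpBS_sub]
    module
  rw [hdecomp]
  have hnorm : ‖c₁ • (-perpBS y) + (c₁ - c₂) • perpBS x‖
      ≤ |c₁| * ‖y‖ + |c₁ - c₂| * ‖x‖ := by
    refine le_trans (norm_add_le _ _) ?_
    rw [norm_smul, norm_smul, norm_neg, norm_perpBS, norm_perpBS, Real.norm_eq_abs,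
      Real.norm_eq_abs]
  refine le_trans hnorm ?_
  have b1 : |c₁| * ‖y‖ ≤ (8 / 27 * ‖y‖) / ‖x‖ ^ 2 := by
    have h1 : |c₁| ≤ (27 / 8 * ‖x‖ ^ 2)⁻¹ := by
      rw [hc₁, abs_of_nonneg (by positivity)]
      apply inv_anti₀ (by positivity)
      nlinarith
    calc |c₁| * ‖y‖ ≤ (27 / 8 * ‖x‖ ^ 2)⁻¹ * ‖y‖ :=
          mul_le_mul_of_nonneg_right h1 (norm_nonneg y)
      _ = (8 / 27 * ‖y‖) / ‖x‖ ^ 2 := by field_simp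
  have hdiff : |‖x‖ ^ 2 - ‖x - y‖ ^ 2| ≤ ‖y‖ * (9 / 4 * ‖x‖) := by
    have h1 : |‖x‖ - ‖x - y‖| ≤ ‖y‖ := by
      have := abs_norm_sub_norm_le x (x - y)
      simpa [show x - (x - y) = y by abel] using this
    have heq : |‖x‖ ^ 2 - ‖x - y‖ ^ 2| = |‖x‖ - ‖x - y‖| * (‖x‖ + ‖x - y‖) := by
      rw [show ‖x‖ ^ 2 - ‖x - y‖ ^ 2 = (‖x‖ - ‖x - y‖) * (‖x‖ + ‖x - y‖) by ring,
        abs_mul, abs_of_nonneg (show (0:ℝ) ≤ ‖x‖ + ‖x - y‖ by positivity)]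
    rw [heq]
    have h2 : ‖x‖ + ‖x - y‖ ≤ 9 / 4 * ‖x‖ := by linarith
    exact mul_le_mul h1 h2 (by positivity) (norm_nonneg y)
  have b2 : |c₁ - c₂| * ‖x‖ ≤ (2 / 3 * ‖y‖) / ‖x‖ ^ 2 := by
    have hcc : c₁ - c₂ = (‖x‖ ^ 2 - ‖x - y‖ ^ 2) / (2 * Real.pi * ‖x - y‖ ^ 2 * ‖x‖ ^ 2) := by
      rw [hc₁, hc₂]
      field_simp
    have hden : 27 / 8 * ‖x‖ ^ 4 ≤ 2 * Real.pi * ‖x - y‖ ^ 2 * ‖x‖ ^ 2 := by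
      nlinarith [mul_le_mul_of_nonneg_right hA2 (sq_nonneg ‖x‖), sq_nonneg ‖x‖,
        mul_pos (mul_pos hA0 hA0) (mul_pos hX0 hX0)]
    have habs : |c₁ - c₂| ≤ (‖y‖ * (9 / 4 * ‖x‖)) / (27 / 8 * ‖x‖ ^ 4) := by
      rw [hcc, abs_div,
        abs_of_nonneg (show (0:ℝ) ≤ 2 * Real.pi * ‖x - y‖ ^ 2 * ‖x‖ ^ 2 by positivity)]
      exact div_le_div₀ (by positivity) hdiff (by positivity) hden
    calc |c₁ - c₂| * ‖x‖ ≤ ((‖y‖ * (9 / 4 * ‖x‖)) / (27 / 8 * ‖x‖ ^ 4)) * ‖x‖ :=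
          mul_le_mul_of_nonneg_right habs (norm_nonneg x)
      _ = (2 / 3 * ‖y‖) / ‖x‖ ^ 2 := by field_simp; ring
  calc |c₁| * ‖y‖ + |c₁ - c₂| * ‖x‖
      ≤ (8 / 27 * ‖y‖) / ‖x‖ ^ 2 + (2 / 3 * ‖y‖) / ‖x‖ ^ 2 := add_le_add b1 b2
    _ = (8 / 27 * ‖y‖ + 2 / 3 * ‖y‖) / ‖x‖ ^ 2 := by ring
    _ ≤ 2 * R / ‖x‖ ^ 2 := by
        apply div_le_div_of_nonneg_right ?_ (by positivity)
        linarith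

lemma volume_closedBall_plane (r : ℝ) (hr : 0 ≤ r) :
    volume (closedBall (0:Plane) r)
      = ENNReal.ofReal (r ^ 2) * volume (ball (0:Plane) 1) := by
  rw [Measure.addHaar_closedBall _ _ hr]
  congr 1
  rw [finrank_euclideanSpace_fin]

lemma lintegral_kernel_ball (r : ℝ) (hr : 0 < r) :
    ∫⁻ z in closedBall (0:Plane) r, ENNReal.ofReal ((2 * Real.pi * ‖z‖)⁻¹) < ⊤ := by
  have hpi : (3:ℝ) < Real.pi := Real.pi_gt_three
  set V1 := volume (ball (0:Plane) 1) with hV1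
  have hV1top : V1 < ⊤ := measure_ball_lt_top
  set A : ℕ → Set Plane := fun n => {z | r / 2 ^ (n+1) < ‖z‖ ∧ ‖z‖ ≤ r / 2 ^ n} with hA
  have hcover : closedBall (0:Plane) r ⊆ {0} ∪ ⋃ n, A n := by
    intro z hz
    rcases eq_or_ne z 0 with h0 | h0
    · exact Or.inl (by simp [h0])
    · right
      have hz0 : 0 < ‖z‖ := norm_pos_iff.2 h0
      have hzr : ‖z‖ ≤ r := by simpa using mem_closedBall_iff_norm.1 hz
      have hex : ∃ n : ℕ, r / 2 ^ (n+1) < ‖z‖ := by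
        obtain ⟨n, hn⟩ : ∃ n : ℕ, r / ‖z‖ < 2 ^ n := pow_unbounded_of_one_lt _ (by norm_num)
        refine ⟨n, ?_⟩
        rw [div_lt_iff₀ hz0] at hn
        rw [div_lt_iff₀ (by positivity)]
        calc r < 2 ^ n * ‖z‖ := hn
          _ ≤ ‖z‖ * 2 ^ (n+1) := by
              rw [pow_succ]
              nlinarith [pow_pos (show (0:ℝ) < 2 by norm_num) n]
      refine mem_iUnion.2 ⟨Nat.find hex, Nat.find_spec hex, ?_⟩
      rcases Nat.eq_zero_or_pos (Nat.find hex) with h | h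
      · rw [h]; simpa using hzr
      · have := Nat.find_min hex (Nat.sub_lt h one_pos)
        push_neg at this
        have heq : Nat.find hex - 1 + 1 = Nat.find hex := Nat.succ_pred_eq_of_pos h
        rwa [heq] at this
  have hAnn : ∀ n : ℕ, ∫⁻ z in A n, ENNReal.ofReal ((2 * Real.pi * ‖z‖)⁻¹)
      ≤ ENNReal.ofReal (r / 2 ^ n) * V1 := by
    intro n
    have h2n : (0:ℝ) < 2 ^ n := by positivity
    have hbound : ∀ z ∈ A n, ENNReal.ofReal ((2 * Real.pi * ‖z‖)⁻¹)
        ≤ ENNReal.ofReal ((2 * Real.pi * (r / 2 ^ (n+1)))⁻¹) := by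
      intro z hz
      apply ENNReal.ofReal_le_ofReal
      apply inv_anti₀ (by positivity)
      have := hz.1
      nlinarith [Real.pi_gt_three]
    calc ∫⁻ z in A n, ENNReal.ofReal ((2 * Real.pi * ‖z‖)⁻¹)
        ≤ ∫⁻ _ in A n, ENNReal.ofReal ((2 * Real.pi * (r / 2 ^ (n+1)))⁻¹) :=
          setLIntegral_mono (by fun_prop) hbound
      _ = ENNReal.ofReal ((2 * Real.pi * (r / 2 ^ (n+1)))⁻¹) * volume (A n) := by
          rw [setLIntegral_const]
      _ ≤ ENNReal.ofReal ((2 * Real.pi * (r / 2 ^ (n+1)))⁻¹)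
            * (ENNReal.ofReal ((r / 2 ^ n) ^ 2) * V1) := by
          gcongr
          rw [← volume_closedBall_plane _ (by positivity)]
          apply measure_mono
          intro z hz
          exact mem_closedBall_iff_norm.2 (by simpa using hz.2)
      _ ≤ ENNReal.ofReal (r / 2 ^ n) * V1 := by
          rw [← mul_assoc, ← ENNReal.ofReal_mul (by positivity)]
          apply mul_le_mul_left
          apply ENNReal.ofReal_le_ofReal
          rw [inv_mul_le_iff₀ (by positivity)]
          have h1 : (2:ℝ) ^ (n+1) = 2 * 2 ^ n := by ring
          rw [h1]
          have : 2 * Real.pi * (r / (2 * 2 ^ n)) * (r / 2 ^ n) = Real.pi * (r / 2 ^ n) ^ 2 := by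
            field_simp
          rw [this]
          nlinarith [sq_nonneg (r / 2 ^ n)]
  calc ∫⁻ z in closedBall (0:Plane) r, ENNReal.ofReal ((2 * Real.pi * ‖z‖)⁻¹)
      ≤ ∫⁻ z in {0} ∪ ⋃ n, A n, ENNReal.ofReal ((2 * Real.pi * ‖z‖)⁻¹) :=
        lintegral_mono_set hcover
    _ ≤ (∫⁻ z in {(0:Plane)}, ENNReal.ofReal ((2 * Real.pi * ‖z‖)⁻¹))
        + ∫⁻ z in ⋃ n, A n, ENNReal.ofReal ((2 * Real.pi * ‖z‖)⁻¹) := lintegral_union_le _ _ _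
    _ ≤ 0 + ∑' n, ∫⁻ z in A n, ENNReal.ofReal ((2 * Real.pi * ‖z‖)⁻¹) := by
        gcongr
        · rw [setLIntegral_measure_zero _ _ (measure_singleton _)]
        · exact lintegral_iUnion_le _ _
    _ ≤ ∑' n : ℕ, ENNReal.ofReal (r / 2 ^ n) * V1 := by
        rw [zero_add]
        exact ENNReal.tsum_le_tsum hAnn
    _ < ⊤ := by
        have h : ∀ n : ℕ, ENNReal.ofReal (r / 2 ^ n) * V1
            = (ENNReal.ofReal r * V1) * (ENNReal.ofReal 2⁻¹) ^ n := by
          intro n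
          rw [div_eq_mul_inv, ← inv_pow, ENNReal.ofReal_mul hr.le,
            ENNReal.ofReal_pow (by norm_num)]
          ring
        simp_rw [h]
        rw [ENNReal.tsum_mul_left]
        apply ENNReal.mul_lt_top
        · exact ENNReal.mul_lt_top ENNReal.ofReal_lt_top hV1top
        · rw [ENNReal.tsum_geometric, ENNReal.inv_lt_top, tsub_pos_iff_lt]
          exact ENNReal.ofReal_lt_one.2 (by norm_num)

lemma lintegral_far_decay (r : ℝ) (hr : 0 < r) :
    ∫⁻ x in (closedBall (0:Plane) r)ᶜ, ENNReal.ofReal (1 / ‖x‖ ^ 2) ^ 2 < ⊤ := by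
  have hint : Integrable (fun x : Plane => ((1 + r) / r) ^ 4 * (1 + ‖x‖) ^ (-(4:ℝ))) volume := by
    apply Integrable.const_mul
    apply integrable_one_add_norm
    rw [finrank_euclideanSpace_fin]
    norm_num
  set c : ℝ := ((1 + r) / r) ^ 4 with hc
  have hc0 : (0:ℝ) < c := by positivity
  have hpt : ∀ x : Plane, x ∈ (closedBall (0:Plane) r)ᶜ →
      ENNReal.ofReal (1 / ‖x‖ ^ 2) ^ 2 ≤ ENNReal.ofReal (c * (1 + ‖x‖) ^ (-(4:ℝ))) := by
    intro x hx
    have hxr : r < ‖x‖ := by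
      simpa [mem_closedBall_iff_norm, not_le] using hx
    have hx0 : (0:ℝ) < ‖x‖ := lt_trans hr hxr
    rw [← ENNReal.ofReal_pow (by positivity)]
    apply ENNReal.ofReal_le_ofReal
    have h4 : (1 + ‖x‖) ^ (-(4:ℝ)) = ((1 + ‖x‖) ^ (4:ℕ))⁻¹ := by
      rw [Real.rpow_neg (by positivity), ← Real.rpow_natCast (1 + ‖x‖) 4]
      norm_num
    rw [h4]
    have key : (1 + ‖x‖) ^ (4:ℕ) ≤ c * ‖x‖ ^ 4 := by
      have h1 : 1 + ‖x‖ ≤ (1 + r) / r * ‖x‖ := by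
        rw [div_mul_eq_mul_div, le_div_iff₀ hr]
        nlinarith
      calc (1 + ‖x‖) ^ (4:ℕ) ≤ ((1 + r) / r * ‖x‖) ^ (4:ℕ) :=
            pow_le_pow_left₀ (by positivity) h1 4
        _ = c * ‖x‖ ^ 4 := by rw [mul_pow, hc]
    have heq : (1 / ‖x‖ ^ 2) ^ 2 = 1 / ‖x‖ ^ 4 := by ring
    rw [heq, ← div_eq_mul_inv, div_le_div_iff₀ (by positivity) (by positivity)]
    nlinarith [key]
  have hmeas : Measurable fun x : Plane => ENNReal.ofReal (c * (1 + ‖x‖) ^ (-(4:ℝ))) := by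
    apply Measurable.ennreal_ofReal
    fun_prop
  calc ∫⁻ x in (closedBall (0:Plane) r)ᶜ, ENNReal.ofReal (1 / ‖x‖ ^ 2) ^ 2
      ≤ ∫⁻ x in (closedBall (0:Plane) r)ᶜ, ENNReal.ofReal (c * (1 + ‖x‖) ^ (-(4:ℝ))) :=
        setLIntegral_mono hmeas hpt
    _ ≤ ∫⁻ x, ENNReal.ofReal (c * (1 + ‖x‖) ^ (-(4:ℝ))) := setLIntegral_le_lintegral _ _
    _ ≤ ∫⁻ x, ‖c * (1 + ‖x‖) ^ (-(4:ℝ))‖₊ :=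
        lintegral_mono fun x => Real.ofReal_le_enorm _
    _ < ⊤ := hint.hasFiniteIntegral

/-- **Global `L²` estimate on the Biot-Savart velocity of a compactly supported,
zero-average vorticity.**  For every `R > 0` there is a constant `C = C(R)` such that for
every `ω ∈ L²(ℝ²)` supported in the closed ball of radius `R` and with `∫ ω = 0`, the
velocity `u = K ∗ ω` belongs to `L²(ℝ²; ℝ²)` with `‖u‖_{L²} ≤ C ‖ω‖_{L²}`. -/
theorem biotSavartVelocity_L2_estimate
    (R : ℝ) (hR : 0 < R) :
    ∃ C : ℝ, 0 < C ∧
      ∀ ω : Plane → ℝ,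
        MemLp ω 2 volume →
        Function.support ω ⊆ Metric.closedBall 0 R →
        (∫ x, ω x) = 0 →
        MemLp (biotSavartVelocity ω) 2 volume ∧
        eLpNorm (biotSavartVelocity ω) 2 volume ≤
          ENNReal.ofReal C * eLpNorm ω 2 volume := by
  classical
  -- notation
  set BR := closedBall (0:Plane) R with hBRdef
  set B4 := closedBall (0:Plane) (4*R) with hB4def
  set B5 := closedBall (0:Plane) (5*R) with hB5def
  set g : Plane → ℝ≥0∞ := fun z => ENNReal.ofReal ((2 * Real.pi * ‖z‖)⁻¹) with hgdef
  have hg_m : Measurable g := by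
    apply Measurable.ennreal_ofReal
    exact ((continuous_const.mul continuous_norm).measurable).inv
  set g₁ : Plane → ℝ≥0∞ := B5.indicator g with hg₁def
  have hg₁_m : Measurable g₁ := hg_m.indicator measurableSet_closedBall
  have hKnorm : ∀ z : Plane, (‖biotSavartKernel z‖₊ : ℝ≥0∞) = g z := fun z => by
    rw [← enorm_eq_nnnorm, ← ofReal_norm, norm_biotSavartKernel]
  -- the three constants
  set I₁ : ℝ≥0∞ := ∫⁻ z, g₁ z with hI₁def
  have hI₁eq : I₁ = ∫⁻ z in B5, g z := by
    rw [hI₁def, hg₁def, lintegral_indicator measurableSet_closedBall g]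
  have hI₁top : I₁ < ⊤ := by
    rw [hI₁eq]; exact lintegral_kernel_ball _ (by positivity)
  set J : ℝ≥0∞ := ∫⁻ x in B4ᶜ, ENNReal.ofReal (1 / ‖x‖ ^ 2) ^ 2 with hJdef
  have hJtop : J < ⊤ := lintegral_far_decay _ (by positivity)
  set VR : ℝ≥0∞ := volume BR with hVRdef
  have hVRtop : VR < ⊤ := measure_closedBall_lt_top
  set D : ℝ≥0∞ := I₁ ^ 2 + ENNReal.ofReal (2*R) ^ 2 * VR * J with hDdef
  have hDtop : D ≠ ⊤ := by
    rw [hDdef]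
    apply ENNReal.add_ne_top.2
    constructor
    · exact (ENNReal.pow_lt_top hI₁top).ne
    · exact (ENNReal.mul_lt_top
        (ENNReal.mul_lt_top (ENNReal.pow_lt_top ENNReal.ofReal_lt_top) hVRtop) hJtop).ne
  -- helpers
  have rpow2 : ∀ a : ℝ≥0∞, a ^ (2:ℝ) = a ^ (2:ℕ) := fun a => by
    rw [← ENNReal.rpow_natCast a 2]; norm_num
  have half_mul : ∀ a : ℝ≥0∞, a ^ ((1:ℝ)/2) * a ^ ((1:ℝ)/2) = a := fun a => by
    rw [← ENNReal.rpow_add_of_nonneg _ _ (by norm_num) (by norm_num)]; norm_num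
  have sqrt_sq : ∀ a : ℝ≥0∞, (a ^ ((1:ℝ)/2)) ^ (2:ℕ) = a := fun a => by
    rw [pow_two]; exact half_mul a
  refine ⟨Real.sqrt D.toReal + 1, by positivity, ?_⟩
  intro ω hω hsupp hzero
  have hωm := hω.aestronglyMeasurable
  set f : Plane → ℝ≥0∞ := fun y => (‖ω y‖₊ : ℝ≥0∞) with hfdef
  have hf_ae : AEMeasurable f volume := hωm.enorm
  have hf_ne : ∀ y, f y ≠ ⊤ := fun y => ENNReal.coe_ne_top
  set S : ℝ≥0∞ := ∫⁻ y, f y ^ (2:ℕ) with hSdef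
  have hS_eLp : eLpNorm ω 2 volume = S ^ ((1:ℝ)/2) := by
    rw [eLpNorm_eq_lintegral_rpow_enorm_toReal two_ne_zero ENNReal.ofNat_ne_top, hSdef]
    norm_num
    rfl
  have hωInt : Integrable ω volume := by
    have hind : Set.indicator BR ω = ω := Set.indicator_eq_self.2 hsupp
    rw [← hind, integrable_indicator_iff measurableSet_closedBall]
    haveI : IsFiniteMeasure (volume.restrict BR) :=
      ⟨by rw [Measure.restrict_apply_univ]; exact measure_closedBall_lt_top⟩
    exact ((hω.restrict _).mono_exponent (by norm_num)).integrable le_rfl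
  have hLf : ENNReal.ofReal (∫ y, ‖ω y‖) = ∫⁻ y, f y := by
    rw [ofReal_integral_eq_lintegral_ofReal hωInt.norm (ae_of_all _ fun y => norm_nonneg _)]
    exact lintegral_congr fun y => ofReal_norm (ω y)
  have hLf_ne : (∫⁻ y, f y) ≠ ⊤ := by rw [← hLf]; exact ENNReal.ofReal_ne_top
  -- Step A : pointwise bound by the positive convolution
  have stepA : ∀ x : Plane, (‖biotSavartVelocity ω x‖₊ : ℝ≥0∞) ≤ ∫⁻ y, f y * g (x - y) := by
    intro x
    refine le_trans (enorm_integral_le_lintegral_enorm _) (le_of_eq ?_)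
    refine lintegral_congr fun y => ?_
    rw [enorm_eq_nnnorm, nnnorm_smul, ENNReal.coe_mul, hKnorm]
  -- Near field
  have hfg : ∀ x ∈ B4, (∫⁻ y, f y * g (x - y)) = ∫⁻ y, f y * g₁ (x - y) := by
    intro x hx
    refine lintegral_congr fun y => ?_
    rcases eq_or_ne (ω y) 0 with h0 | h0
    · simp [hfdef, h0]
    · have hy : ‖y‖ ≤ R := by
        have := hsupp (Function.mem_support.2 h0)
        rwa [hBRdef, mem_closedBall_zero_iff] at this
      have hx4 : ‖x‖ ≤ 4*R := by rwa [hB4def, mem_closedBall_zero_iff] at hx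
      have hxy : x - y ∈ B5 := by
        rw [hB5def, mem_closedBall_zero_iff]
        calc ‖x - y‖ ≤ ‖x‖ + ‖y‖ := norm_sub_le _ _
          _ ≤ 5*R := by linarith
      rw [hg₁def, Set.indicator_of_mem hxy]
  have holder : ∀ x : Plane, (∫⁻ y, f y * g₁ (x - y)) ^ (2:ℕ)
      ≤ (∫⁻ y, f y ^ (2:ℕ) * g₁ (x - y)) * I₁ := by
    intro x
    have hgx_m : Measurable fun y : Plane => g₁ (x - y) :=
      hg₁_m.comp (measurable_const.sub measurable_id)
    set Q : ℝ≥0∞ := ∫⁻ y, f y ^ (2:ℕ) * g₁ (x - y) with hQdef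
    have key : (∫⁻ y, f y * g₁ (x - y)) ≤ Q ^ ((1:ℝ)/2) * I₁ ^ ((1:ℝ)/2) := by
      have h1 : (∫⁻ y, f y * g₁ (x - y))
          = ∫⁻ y, ((fun y => f y * g₁ (x - y) ^ ((1:ℝ)/2)) * fun y => g₁ (x - y) ^ ((1:ℝ)/2)) y := by
        refine lintegral_congr fun y => ?_
        simp only [Pi.mul_apply]
        rw [mul_assoc, half_mul]
      have h2 := ENNReal.lintegral_mul_le_Lp_mul_Lq volume
        Real.HolderConjugate.two_two
        (hf_ae.mul ((hgx_m.aemeasurable).pow_const ((1:ℝ)/2)))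
        ((hgx_m.aemeasurable).pow_const ((1:ℝ)/2))
      have e1 : (∫⁻ y, (f y * g₁ (x - y) ^ ((1:ℝ)/2)) ^ (2:ℝ)) = Q := by
        refine lintegral_congr fun y => ?_
        rw [rpow2, mul_pow, sqrt_sq]
      have e2 : (∫⁻ y, (g₁ (x - y) ^ ((1:ℝ)/2)) ^ (2:ℝ)) = I₁ := by
        have : ∀ y : Plane, (g₁ (x - y) ^ ((1:ℝ)/2)) ^ (2:ℝ) = g₁ (x - y) := fun y => by
          rw [rpow2, sqrt_sq]
        rw [lintegral_congr this, hI₁def]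
        exact (Measure.measurePreserving_sub_left volume x).lintegral_comp hg₁_m
      rw [h1]
      calc ∫⁻ y, ((fun y => f y * g₁ (x - y) ^ ((1:ℝ)/2)) * fun y => g₁ (x - y) ^ ((1:ℝ)/2)) y
          ≤ (∫⁻ y, (f y * g₁ (x - y) ^ ((1:ℝ)/2)) ^ (2:ℝ)) ^ ((1:ℝ)/2)
            * (∫⁻ y, (g₁ (x - y) ^ ((1:ℝ)/2)) ^ (2:ℝ)) ^ ((1:ℝ)/2) := h2
        _ = Q ^ ((1:ℝ)/2) * I₁ ^ ((1:ℝ)/2) := by rw [e1, e2]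
    calc (∫⁻ y, f y * g₁ (x - y)) ^ (2:ℕ)
        ≤ (Q ^ ((1:ℝ)/2) * I₁ ^ ((1:ℝ)/2)) ^ (2:ℕ) := pow_le_pow_left' key 2
      _ = ((Q ^ ((1:ℝ)/2)) ^ (2:ℕ)) * ((I₁ ^ ((1:ℝ)/2)) ^ (2:ℕ)) := mul_pow _ _ 2
      _ = Q * I₁ := by rw [sqrt_sq, sqrt_sq]
  have hF2 : AEMeasurable (fun z : Plane × Plane => f z.2 ^ (2:ℕ) * g₁ (z.1 - z.2))
      ((volume : Measure Plane).prod volume) :=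
    ((hf_ae.pow_const 2).comp_snd).mul ((hg₁_m.comp (measurable_fst.sub measurable_snd)).aemeasurable)
  have hnear : ∫⁻ x in B4, (‖biotSavartVelocity ω x‖₊ : ℝ≥0∞) ^ (2:ℕ) ≤ I₁ ^ 2 * S := by
    have hb : ∀ᵐ x ∂(volume.restrict B4), (‖biotSavartVelocity ω x‖₊ : ℝ≥0∞) ^ (2:ℕ)
        ≤ (∫⁻ y, f y ^ (2:ℕ) * g₁ (x - y)) * I₁ := by
      refine (ae_restrict_iff' measurableSet_closedBall).2 (ae_of_all _ fun x hx => ?_)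
      calc (‖biotSavartVelocity ω x‖₊ : ℝ≥0∞) ^ (2:ℕ)
          ≤ (∫⁻ y, f y * g (x - y)) ^ (2:ℕ) := pow_le_pow_left' (stepA x) 2
        _ = (∫⁻ y, f y * g₁ (x - y)) ^ (2:ℕ) := by rw [hfg x hx]
        _ ≤ (∫⁻ y, f y ^ (2:ℕ) * g₁ (x - y)) * I₁ := holder x
    calc ∫⁻ x in B4, (‖biotSavartVelocity ω x‖₊ : ℝ≥0∞) ^ (2:ℕ)
        ≤ ∫⁻ x in B4, (∫⁻ y, f y ^ (2:ℕ) * g₁ (x - y)) * I₁ := lintegral_mono_ae hb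
      _ ≤ ∫⁻ x, (∫⁻ y, f y ^ (2:ℕ) * g₁ (x - y)) * I₁ := setLIntegral_le_lintegral _ _
      _ = I₁ * ∫⁻ x, ∫⁻ y, f y ^ (2:ℕ) * g₁ (x - y) := by
          simp_rw [mul_comm _ I₁]
          exact lintegral_const_mul' I₁ _ hI₁top.ne
      _ = I₁ * ∫⁻ y, ∫⁻ x, f y ^ (2:ℕ) * g₁ (x - y) := by
          rw [lintegral_lintegral_swap hF2]
      _ = I₁ * ∫⁻ y, f y ^ (2:ℕ) * I₁ := by
          congr 1
          refine lintegral_congr fun y => ?_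
          rw [lintegral_const_mul' _ _ (ENNReal.pow_ne_top (hf_ne y))]
          congr 1
          exact lintegral_sub_right_eq_self g₁ y
      _ = I₁ ^ 2 * S := by
          rw [lintegral_mul_const' I₁ _ hI₁top.ne, hSdef]
          ring
  -- Far field
  have hfarpt : ∀ x : Plane, x ∈ B4ᶜ → (‖biotSavartVelocity ω x‖₊ : ℝ≥0∞)
      ≤ (∫⁻ y, f y) * ENNReal.ofReal (2*R) * ENNReal.ofReal (1 / ‖x‖ ^ 2) := by
    intro x hx
    have hx4 : 4*R < ‖x‖ := by
      rw [hB4def, mem_compl_iff, mem_closedBall_zero_iff, not_le] at hx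
      exact hx
    have hX0 : (0:ℝ) < ‖x‖ := lt_of_le_of_lt (by positivity) hx4
    have hsupp2 : Function.support (fun y => ω y • biotSavartKernel (x - y)) ⊆ BR := by
      intro y hy
      apply hsupp
      intro h0
      apply hy
      simp [h0]
    have hInt : Integrable (fun y => ω y • biotSavartKernel (x - y)) volume := by
      rw [← Set.indicator_eq_self.2 hsupp2, integrable_indicator_iff measurableSet_closedBall]
      apply Integrable.mono' ((hωInt.norm.restrict (s := BR)).mul_const ((2*Real.pi*(3*R))⁻¹))
      · exact (hωm.restrict).smul
          ((measurable_biotSavartKernel.comp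
            (measurable_const.sub measurable_id)).aestronglyMeasurable.restrict)
      · refine (ae_restrict_iff' measurableSet_closedBall).2 (ae_of_all _ fun y hy => ?_)
        have hyR : ‖y‖ ≤ R := mem_closedBall_zero_iff.1 hy
        have h3R : 3*R ≤ ‖x - y‖ := by
          have := norm_sub_norm_le x y
          linarith
        rw [norm_smul, norm_biotSavartKernel]
        apply mul_le_mul_of_nonneg_left ?_ (norm_nonneg _)
        apply inv_anti₀ (by positivity)
        nlinarith [Real.pi_gt_three]
    have hrw : biotSavartVelocity ω x
        = ∫ y, ω y • (biotSavartKernel (x - y) - biotSavartKernel x) := by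
      have h1 : ∫ y, ω y • (biotSavartKernel (x - y) - biotSavartKernel x)
          = (∫ y, ω y • biotSavartKernel (x - y)) - ∫ y, ω y • biotSavartKernel x := by
        simp_rw [smul_sub]
        exact integral_sub hInt (hωInt.smul_const _)
      rw [h1, integral_smul_const, hzero, zero_smul, sub_zero]
      rfl
    have hnormb : ‖biotSavartVelocity ω x‖ ≤ ∫ y, ‖ω y‖ * (2*R / ‖x‖ ^ 2) := by
      rw [hrw]
      apply norm_integral_le_of_norm_le (hωInt.norm.mul_const _)
      refine ae_of_all _ fun y => ?_
      rcases eq_or_ne (ω y) 0 with h0 | h0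
      · simp only [h0, zero_smul, norm_zero]
        positivity
      · have hyR : ‖y‖ ≤ R := by
          have := hsupp (Function.mem_support.2 h0)
          rwa [hBRdef, mem_closedBall_zero_iff] at this
        rw [norm_smul]
        exact mul_le_mul_of_nonneg_left (kernel_diff_bound hR hyR hx4.le) (norm_nonneg _)
    have hIb : (∫ y, ‖ω y‖ * (2*R / ‖x‖ ^ 2)) = (∫ y, ‖ω y‖) * (2*R / ‖x‖ ^ 2) :=
      integral_mul_const _ _
    have hL₁0 : (0:ℝ) ≤ ∫ y, ‖ω y‖ := integral_nonneg fun y => norm_nonneg _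
    calc (‖biotSavartVelocity ω x‖₊ : ℝ≥0∞)
        = ENNReal.ofReal ‖biotSavartVelocity ω x‖ := (ofReal_norm _).symm
      _ ≤ ENNReal.ofReal ((∫ y, ‖ω y‖) * (2*R / ‖x‖ ^ 2)) := by
          apply ENNReal.ofReal_le_ofReal
          rw [← hIb]
          exact hnormb
      _ = ENNReal.ofReal ((∫ y, ‖ω y‖) * (2*R) * (1 / ‖x‖ ^ 2)) := by
          congr 1
          field_simp
      _ = (∫⁻ y, f y) * ENNReal.ofReal (2*R) * ENNReal.ofReal (1 / ‖x‖ ^ 2) := by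
          rw [ENNReal.ofReal_mul (by positivity), ENNReal.ofReal_mul hL₁0, hLf]
  have hL2 : (∫⁻ y, f y) ^ (2:ℕ) ≤ S * VR := by
    have hind : (∫⁻ y, f y) = ∫⁻ y, (f * BR.indicator fun _ => (1:ℝ≥0∞)) y := by
      refine lintegral_congr fun y => ?_
      simp only [Pi.mul_apply]
      rcases eq_or_ne (ω y) 0 with h0 | h0
      · simp [hfdef, h0]
      · rw [Set.indicator_of_mem (hsupp (Function.mem_support.2 h0)), mul_one]
    have hh := ENNReal.lintegral_mul_le_Lp_mul_Lq volume
      Real.HolderConjugate.two_two (f := f)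
      (g := BR.indicator fun _ => (1:ℝ≥0∞)) hf_ae
      ((measurable_const.indicator measurableSet_closedBall).aemeasurable)
    have e1 : (∫⁻ y, f y ^ (2:ℝ)) = S := by
      rw [hSdef]
      exact lintegral_congr fun y => by rw [rpow2]
    have e2 : (∫⁻ y, (BR.indicator (fun _ => (1:ℝ≥0∞)) y) ^ (2:ℝ)) = VR := by
      have : ∀ y : Plane, (BR.indicator (fun _ => (1:ℝ≥0∞)) y) ^ (2:ℝ)
          = BR.indicator (fun _ => (1:ℝ≥0∞)) y := fun y => by
        by_cases hy : y ∈ BR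
        · rw [Set.indicator_of_mem hy]; norm_num
        · rw [Set.indicator_of_notMem hy]
          rw [ENNReal.zero_rpow_of_pos (by norm_num)]
      rw [lintegral_congr this, lintegral_indicator measurableSet_closedBall _]
      simp only [lintegral_const, Measure.restrict_apply_univ, one_mul, hVRdef]
      rfl
    have key : (∫⁻ y, f y) ≤ S ^ ((1:ℝ)/2) * VR ^ ((1:ℝ)/2) := by
      rw [hind]
      calc ∫⁻ y, (f * BR.indicator fun _ => (1:ℝ≥0∞)) y
          ≤ (∫⁻ y, f y ^ (2:ℝ)) ^ ((1:ℝ)/2)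
            * (∫⁻ y, (BR.indicator (fun _ => (1:ℝ≥0∞)) y) ^ (2:ℝ)) ^ ((1:ℝ)/2) := hh
        _ = S ^ ((1:ℝ)/2) * VR ^ ((1:ℝ)/2) := by rw [e1, e2]
    calc (∫⁻ y, f y) ^ (2:ℕ) ≤ (S ^ ((1:ℝ)/2) * VR ^ ((1:ℝ)/2)) ^ (2:ℕ) := pow_le_pow_left' key 2
      _ = ((S ^ ((1:ℝ)/2)) ^ (2:ℕ)) * ((VR ^ ((1:ℝ)/2)) ^ (2:ℕ)) := mul_pow _ _ 2
      _ = S * VR := by rw [sqrt_sq, sqrt_sq]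
  have hfar : ∫⁻ x in B4ᶜ, (‖biotSavartVelocity ω x‖₊ : ℝ≥0∞) ^ (2:ℕ)
      ≤ ENNReal.ofReal (2*R) ^ 2 * VR * J * S := by
    have hb : ∀ᵐ x ∂(volume.restrict B4ᶜ), (‖biotSavartVelocity ω x‖₊ : ℝ≥0∞) ^ (2:ℕ)
        ≤ ((∫⁻ y, f y) * ENNReal.ofReal (2*R)) ^ (2:ℕ) * ENNReal.ofReal (1 / ‖x‖ ^ 2) ^ (2:ℕ) := by
      refine (ae_restrict_iff' measurableSet_closedBall.compl).2 (ae_of_all _ fun x hx => ?_)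
      calc (‖biotSavartVelocity ω x‖₊ : ℝ≥0∞) ^ (2:ℕ)
          ≤ ((∫⁻ y, f y) * ENNReal.ofReal (2*R) * ENNReal.ofReal (1 / ‖x‖ ^ 2)) ^ (2:ℕ) :=
            pow_le_pow_left' (hfarpt x hx) 2
        _ = ((∫⁻ y, f y) * ENNReal.ofReal (2*R)) ^ (2:ℕ) * ENNReal.ofReal (1 / ‖x‖ ^ 2) ^ (2:ℕ) :=
            mul_pow _ _ 2
    have hconst_ne : ((∫⁻ y, f y) * ENNReal.ofReal (2*R)) ^ (2:ℕ) ≠ ⊤ := by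
      apply ENNReal.pow_ne_top
      exact ENNReal.mul_ne_top hLf_ne ENNReal.ofReal_ne_top
    calc ∫⁻ x in B4ᶜ, (‖biotSavartVelocity ω x‖₊ : ℝ≥0∞) ^ (2:ℕ)
        ≤ ∫⁻ x in B4ᶜ, ((∫⁻ y, f y) * ENNReal.ofReal (2*R)) ^ (2:ℕ)
            * ENNReal.ofReal (1 / ‖x‖ ^ 2) ^ (2:ℕ) := lintegral_mono_ae hb
      _ = ((∫⁻ y, f y) * ENNReal.ofReal (2*R)) ^ (2:ℕ) * J := by
          rw [hJdef]
          exact lintegral_const_mul' _ _ hconst_ne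
      _ = (∫⁻ y, f y) ^ (2:ℕ) * ENNReal.ofReal (2*R) ^ (2:ℕ) * J := by rw [mul_pow]
      _ ≤ (S * VR) * ENNReal.ofReal (2*R) ^ (2:ℕ) * J := by
          exact mul_le_mul_left (mul_le_mul_left hL2 _) _
      _ = ENNReal.ofReal (2*R) ^ 2 * VR * J * S := by ring
  -- measurability of the velocity
  have hu_aesm : AEStronglyMeasurable (biotSavartVelocity ω) volume := by
    have hF : AEStronglyMeasurable (fun p : Plane × Plane => ω p.2 • biotSavartKernel (p.1 - p.2))
        ((volume : Measure Plane).prod volume) :=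
      (hωm.comp_snd).smul
        ((measurable_biotSavartKernel.comp (measurable_fst.sub measurable_snd)).aestronglyMeasurable)
    exact hF.integral_prod_right'
  -- conclusion
  have hmain : ∫⁻ x, (‖biotSavartVelocity ω x‖₊ : ℝ≥0∞) ^ (2:ℕ) ≤ D * S := by
    rw [lintegral_add_compl (fun x => (‖biotSavartVelocity ω x‖₊ : ℝ≥0∞) ^ (2:ℕ))
      (measurableSet_closedBall (x := (0:Plane)) (ε := 4*R)) |>.symm]
    calc (∫⁻ x in B4, (‖biotSavartVelocity ω x‖₊ : ℝ≥0∞) ^ (2:ℕ))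
          + ∫⁻ x in B4ᶜ, (‖biotSavartVelocity ω x‖₊ : ℝ≥0∞) ^ (2:ℕ)
        ≤ I₁ ^ 2 * S + ENNReal.ofReal (2*R) ^ 2 * VR * J * S := add_le_add hnear hfar
      _ = D * S := by rw [hDdef]; ring
  have hSu_eLp : eLpNorm (biotSavartVelocity ω) 2 volume
      = (∫⁻ x, (‖biotSavartVelocity ω x‖₊ : ℝ≥0∞) ^ (2:ℕ)) ^ ((1:ℝ)/2) := by
    rw [eLpNorm_eq_lintegral_rpow_enorm_toReal two_ne_zero ENNReal.ofNat_ne_top]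
    norm_num
    rfl
  have hDle : D ^ ((1:ℝ)/2) ≤ ENNReal.ofReal (Real.sqrt D.toReal + 1) := by
    conv_lhs => rw [← ENNReal.ofReal_toReal hDtop]
    rw [ENNReal.ofReal_rpow_of_nonneg ENNReal.toReal_nonneg (by norm_num)]
    apply ENNReal.ofReal_le_ofReal
    rw [← Real.sqrt_eq_rpow]
    linarith [Real.sqrt_nonneg D.toReal]
  have hbound : eLpNorm (biotSavartVelocity ω) 2 volume
      ≤ ENNReal.ofReal (Real.sqrt D.toReal + 1) * eLpNorm ω 2 volume := by
    rw [hSu_eLp, hS_eLp]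
    calc (∫⁻ x, (‖biotSavartVelocity ω x‖₊ : ℝ≥0∞) ^ (2:ℕ)) ^ ((1:ℝ)/2)
        ≤ (D * S) ^ ((1:ℝ)/2) := ENNReal.rpow_le_rpow hmain (by norm_num)
      _ = D ^ ((1:ℝ)/2) * S ^ ((1:ℝ)/2) := ENNReal.mul_rpow_of_nonneg _ _ (by norm_num)
      _ ≤ ENNReal.ofReal (Real.sqrt D.toReal + 1) * S ^ ((1:ℝ)/2) := mul_le_mul_left hDle _
  refine ⟨⟨hu_aesm, lt_of_le_of_lt hbound ?_⟩, hbound⟩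
  exact ENNReal.mul_lt_top ENNReal.ofReal_lt_top hω.2
end
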